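/- The targeted-bait reproductive number is strictly decreasing in the effective bait density: the function R0(y) = a²·b·c·m·p²·k̄·κ·(1 − r(y))·e^{−ζ(y)·τ} / (δμ·(k̄p + qy)²) is strictly monotonically decreasing on [0, ∞), where r(y) = aγqy / ((p·k̄ + qy)(δ+θ) + aγqy) and ζ(y) = δ + aγqy/(p·k̄ + qy). -/

import Mathlib

/-- The targeted-bait reproductive number
R0(y) = a²bcmp²·k̄·κ·(1−r(y))·e^{−ζ(y)τ}/(δμ(k̄p+qy)²) is strictly
decreasing in the effective bait density y on [0, ∞). -/
theorem targeted_R0_strictAntiOn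
    (a b c m δ μ θ γ τ kbar κ p q : ℝ)
    (ha : 0 < a) (hb : 0 < b) (hc : 0 < c) (hm : 0 < m)
    (hδ : 0 < δ) (hμ : 0 < μ) (hθ : 0 < θ) (hγ : 0 < γ)
    (hτ : 0 < τ) (hkbar : 0 < kbar) (hκ : 0 < κ)
    (hp0 : 0 < p) (hp1 : p < 1) (hq : q = 1 - p) :
    StrictAntiOn
      (fun y : ℝ =>
        a ^ 2 * b * c * m * p ^ 2 * kbar * κ *
          (1 - a * γ * q * y / ((p * kbar + q * y) * (δ + θ) + a * γ * q * y)) *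
          Real.exp (-(δ + a * γ * q * y / (p * kbar + q * y)) * τ) /
          (δ * μ * (kbar * p + q * y) ^ 2))
      (Set.Ici (0 : ℝ)) := by
  intro x hx y hy hxy
  simp only [Set.mem_Ici] at hx hy
  dsimp only
  have hq0 : 0 < q := by rw [hq]; linarith
  have hdx : 0 < p * kbar + q * x := by
    have := mul_nonneg hq0.le hx; nlinarith
  have hdy : 0 < p * kbar + q * y := by
    have := mul_nonneg hq0.le hy; nlinarith
  have hNx : 0 < (p * kbar + q * x) * (δ + θ) + a * γ * q * x := by
    have := mul_nonneg (by positivity : (0:ℝ) ≤ a * γ * q) hx; nlinarith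
  have hNy : 0 < (p * kbar + q * y) * (δ + θ) + a * γ * q * y := by
    have := mul_nonneg (by positivity : (0:ℝ) ≤ a * γ * q) hy; nlinarith
  -- g strictly increasing
  have hg : a * γ * q * x / (p * kbar + q * x) < a * γ * q * y / (p * kbar + q * y) := by
    rw [div_lt_div_iff₀ hdx hdy]
    nlinarith [mul_pos (mul_pos (mul_pos ha hγ) (mul_pos hq0 hq0)) (mul_pos hp0 hkbar),
      mul_pos (mul_pos ha hγ) (mul_pos hq0 hq0)]
  -- factor 1 bounds
  have hF1x : 1 - a * γ * q * x / ((p * kbar + q * x) * (δ + θ) + a * γ * q * x)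
      = (p * kbar + q * x) * (δ + θ) / ((p * kbar + q * x) * (δ + θ) + a * γ * q * x) := by
    field_simp; ring
  have hF1y : 1 - a * γ * q * y / ((p * kbar + q * y) * (δ + θ) + a * γ * q * y)
      = (p * kbar + q * y) * (δ + θ) / ((p * kbar + q * y) * (δ + θ) + a * γ * q * y) := by
    field_simp; ring
  have hF1xpos : 0 < 1 - a * γ * q * x / ((p * kbar + q * x) * (δ + θ) + a * γ * q * x) := by
    rw [hF1x]; positivity
  have hF1ypos : 0 < 1 - a * γ * q * y / ((p * kbar + q * y) * (δ + θ) + a * γ * q * y) := by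
    rw [hF1y]; positivity
  have hF1lt : 1 - a * γ * q * y / ((p * kbar + q * y) * (δ + θ) + a * γ * q * y)
      < 1 - a * γ * q * x / ((p * kbar + q * x) * (δ + θ) + a * γ * q * x) := by
    rw [hF1x, hF1y, div_lt_div_iff₀ hNy hNx]
    nlinarith [mul_pos (mul_pos (mul_pos (mul_pos (mul_pos ha hγ) hq0)
      (add_pos hδ hθ)) (mul_pos hp0 hkbar)) (sub_pos.mpr hxy)]
  -- exp factor
  have hElt : Real.exp (-(δ + a * γ * q * y / (p * kbar + q * y)) * τ)
      < Real.exp (-(δ + a * γ * q * x / (p * kbar + q * x)) * τ) := by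
    exact Real.exp_lt_exp.mpr
      (mul_lt_mul_of_pos_right (neg_lt_neg (add_lt_add_right hg δ)) hτ)
  -- denominators
  have h1 : 0 < kbar * p + q * x :=
    add_pos_of_pos_of_nonneg (mul_pos hkbar hp0) (mul_nonneg hq0.le hx)
  have hDx : 0 < δ * μ * (kbar * p + q * x) ^ 2 := by positivity
  have hDle : δ * μ * (kbar * p + q * x) ^ 2 ≤ δ * μ * (kbar * p + q * y) ^ 2 := by
    have h2 : kbar * p + q * x ≤ kbar * p + q * y :=
      add_le_add_right (mul_le_mul_of_nonneg_left hxy.le hq0.le) _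
    exact mul_le_mul_of_nonneg_left (pow_le_pow_left₀ h1.le h2 2) (mul_pos hδ hμ).le
  have hC : 0 < a ^ 2 * b * c * m * p ^ 2 * kbar * κ := by positivity
  apply div_lt_div₀ _ hDle _ hDx
  · exact mul_lt_mul'' (mul_lt_mul_of_pos_left hF1lt hC) hElt
      (mul_pos hC hF1ypos).le (Real.exp_pos _).le
  · positivity
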